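/- Every set of 5 points in general position in the plane contains a subset of 4 points in convex position. -/

import Mathlib

noncomputable section

/-- Points of the plane. -/
abbrev Pl := ℝ × ℝ

/-- `P` is in general position: no three (distinct) points of `P` are collinear. -/
def GenPos (P : Set Pl) : Prop :=
  ∀ a ∈ P, ∀ b ∈ P, ∀ c ∈ P, a ≠ b → a ≠ c → b ≠ c →
    ¬ Collinear ℝ ({a, b, c} : Set Pl)

/-- The set of all closed straight-line segments with (distinct) endpoints in `P`. -/
def Segs (P : Set Pl) : Set (Set Pl) :=
  {s | ∃ a ∈ P, ∃ b ∈ P, a ≠ b ∧ s = segment ℝ a b}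

/-- The edge disjointness graph of `P`: vertices are the segments of `P`,
two of them adjacent iff they are disjoint. -/
def DisjGraph (P : Set Pl) : SimpleGraph ↥(Segs P) where
  Adj s t := Disjoint (s : Set Pl) (t : Set Pl)
  symm := ⟨fun _ _ h => h.symm⟩
  loopless := ⟨by
    rintro ⟨s, a, ha, b, hb, hab, rfl⟩ h
    exact (Set.not_disjoint_iff.2
      ⟨a, left_mem_segment ℝ a b, left_mem_segment ℝ a b⟩) h⟩

/-- An independent set of vertices: pairwise non-adjacent. -/
def IsIndepSet {V : Type*} (G : SimpleGraph V) (s : Set V) : Prop :=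
  s.Pairwise fun a b => ¬ G.Adj a b

/-- Twice the signed area of the triangle `a b c`; its sign is the orientation. -/
def det3 (a b c : Pl) : ℝ :=
  (b.1 - a.1) * (c.2 - a.2) - (b.2 - a.2) * (c.1 - a.1)

/-- `p 0, …, p (n-1)` are in convex position, appearing in this
(counterclockwise) cyclic order on their convex hull. -/
def ConvexCyclic {n : ℕ} (p : Fin n → Pl) : Prop :=
  ∀ i j k : Fin n, i < j → j < k → 0 < det3 (p i) (p j) (p k)

/-- `P` is in convex position: every point of `P` is a vertex of the convex hull. -/
def ConvexPos (P : Set Pl) : Prop :=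
  ∀ x ∈ P, x ∉ convexHull ℝ (P \ {x})

/-- `P` and `Q` have the same order type. -/
def SameOrderType (P Q : Set Pl) : Prop :=
  ∃ γ : Pl → Pl, Set.BijOn γ P Q ∧
    ∀ a ∈ P, ∀ b ∈ P, ∀ c ∈ P,
      Real.sign (det3 a b c) = Real.sign (det3 (γ a) (γ b) (γ c))

/-- A thrackle of `P`: a set of segments of `P`, any two of which intersect. -/
def IsThrackle (P : Set Pl) (T : Set (Set Pl)) : Prop :=
  T ⊆ Segs P ∧ ∀ s ∈ T, ∀ t ∈ T, s ≠ t → ¬ Disjoint s t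

end


section EstherKlein

lemma det3_comb (u v a b c : Pl) (l1 l2 l3 : ℝ) (h : l1 + l2 + l3 = 1) :
    det3 u v (l1 • a + l2 • b + l3 • c) =
      l1 * det3 u v a + l2 * det3 u v b + l3 * det3 u v c := by
  have h3 : l3 = 1 - l1 - l2 := by linarith
  subst h3
  simp only [det3, Prod.fst_add, Prod.snd_add, Prod.smul_fst, Prod.smul_snd, smul_eq_mul]
  ring

lemma det3_self12 (u v : Pl) : det3 u v v = 0 := by simp only [det3]; ring
lemma det3_self13 (u v : Pl) : det3 u v u = 0 := by simp only [det3]; ring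
lemma det3_cycle (a b c : Pl) : det3 b c a = det3 a b c := by simp only [det3]; ring
lemma det3_swap23 (a b c : Pl) : det3 a c b = -det3 a b c := by simp only [det3]; ring
lemma det3_swap12 (a b c : Pl) : det3 b a c = -det3 a b c := by simp only [det3]; ring

lemma collinear_of_det3 {a b c : Pl} (h : det3 a b c = 0) :
    Collinear ℝ ({a, b, c} : Set Pl) := by
  rcases eq_or_ne b a with rfl | hba
  · have hs : ({b, b, c} : Set Pl) = {b, c} := by simp
    rw [hs]; exact collinear_pair ℝ b c
  · rw [collinear_iff_of_mem (Set.mem_insert a ({b, c} : Set Pl))]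
    refine ⟨b - a, ?_⟩
    intro p hp
    simp only [Set.mem_insert_iff, Set.mem_singleton_iff] at hp
    rcases hp with rfl | rfl | rfl
    · exact ⟨0, by simp⟩
    · exact ⟨1, by simp⟩
    · have hne : b.1 - a.1 ≠ 0 ∨ b.2 - a.2 ≠ 0 := by
        by_contra hc
        push_neg at hc
        exact hba (Prod.ext (by linarith [hc.1]) (by linarith [hc.2]))
      simp only [det3] at h
      rcases hne with h1 | h1
      · refine ⟨(p.1 - a.1) / (b.1 - a.1), ?_⟩
        have e1 : p.1 = (p.1 - a.1) / (b.1 - a.1) * (b.1 - a.1) + a.1 := by field_simp; ring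
        have e2 : p.2 = (p.1 - a.1) / (b.1 - a.1) * (b.2 - a.2) + a.2 := by
          field_simp
          nlinarith [h]
        exact Prod.ext (by simpa using e1) (by simpa using e2)
      · refine ⟨(p.2 - a.2) / (b.2 - a.2), ?_⟩
        have e1 : p.1 = (p.2 - a.2) / (b.2 - a.2) * (b.1 - a.1) + a.1 := by
          field_simp
          nlinarith [h]
        have e2 : p.2 = (p.2 - a.2) / (b.2 - a.2) * (b.2 - a.2) + a.2 := by field_simp; ring
        exact Prod.ext (by simpa using e1) (by simpa using e2)

lemma mem_tri {a b c x : Pl} (h : x ∈ convexHull ℝ ({a, b, c} : Set Pl)) :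
    ∃ l1 l2 l3 : ℝ, 0 ≤ l1 ∧ 0 ≤ l2 ∧ 0 ≤ l3 ∧ l1 + l2 + l3 = 1 ∧
      x = l1 • a + l2 • b + l3 • c := by
  rw [show ({a, b, c} : Set Pl) = insert a {b, c} from rfl,
    convexHull_insert ⟨b, by simp⟩, convexHull_pair] at h
  rw [mem_convexJoin] at h
  obtain ⟨a', ha', z, hz, hx⟩ := h
  rw [Set.mem_singleton_iff] at ha'
  subst ha'
  obtain ⟨u, v, hu, hv, huv, hz⟩ := hz
  obtain ⟨p, q, hp, hq, hpq, hx⟩ := hx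
  refine ⟨p, q * u, q * v, hp, by positivity, by positivity, by nlinarith, ?_⟩
  rw [← hx, ← hz]
  module

lemma zero_comb {l1 l2 A B : ℝ} (hl1 : 0 ≤ l1) (hl2 : 0 ≤ l2)
    (hA : 0 < A) (hB : 0 < B) (h : l1 * A + l2 * B = 0) : l1 = 0 ∧ l2 = 0 := by
  have h1 : l1 * A = 0 := by nlinarith [mul_nonneg hl1 hA.le, mul_nonneg hl2 hB.le]
  have h2 : l2 * B = 0 := by nlinarith [mul_nonneg hl1 hA.le, mul_nonneg hl2 hB.le]
  constructor
  · rcases mul_eq_zero.1 h1 with h | h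
    · exact h
    · exact absurd h hA.ne'
  · rcases mul_eq_zero.1 h2 with h | h
    · exact h
    · exact absurd h hB.ne'

lemma unit_comb {l1 l2 l3 m1 m2 m3 n1 n2 n3 : ℝ}
    (hl1 : 0 ≤ l1) (hl2 : 0 ≤ l2) (hl3 : 0 ≤ l3) (hls : l1 + l2 + l3 = 1)
    (hm1 : 0 ≤ m1) (hm2 : 0 ≤ m2) (hm3 : 0 ≤ m3) (hms : m1 + m2 + m3 = 1)
    (hn1 : 0 ≤ n1) (hn2 : 0 ≤ n2) (hn3 : 0 ≤ n3) (hns : n1 + n2 + n3 = 1)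
    (h : l2 * m1 + l3 * n1 = 1) :
    (m1 = 1 ∧ m2 = 0 ∧ m3 = 0) ∨ (n1 = 1 ∧ n2 = 0 ∧ n3 = 0) := by
  rcases hl2.lt_or_eq with h2 | h2
  · left
    have hm : 1 ≤ m1 := by
      nlinarith [mul_nonneg hl3 (show (0:ℝ) ≤ 1 - n1 by linarith)]
    have hm' : m1 = 1 := by linarith
    exact ⟨hm', by linarith, by linarith⟩
  · right
    have h' : l3 * n1 = 1 := by nlinarith
    have hn : 1 ≤ n1 := by
      nlinarith [mul_nonneg (show (0:ℝ) ≤ 1 - l3 by linarith) hn1]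
    have hn' : n1 = 1 := by linarith
    exact ⟨hn', by linarith, by linarith⟩

lemma interior_pts {a b c d e : Pl} (hde : d ≠ e)
    (hd : d ∈ convexHull ℝ (insert e ({a, b, c} : Set Pl)))
    (he : e ∈ convexHull ℝ (insert d ({a, b, c} : Set Pl))) :
    d ∈ convexHull ℝ ({a, b, c} : Set Pl) ∧ e ∈ convexHull ℝ ({a, b, c} : Set Pl) := by
  set K := convexHull ℝ ({a, b, c} : Set Pl) with hK
  have hne : ({a, b, c} : Set Pl).Nonempty := ⟨a, by simp⟩
  rw [convexHull_insert hne, mem_convexJoin] at hd he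
  obtain ⟨e', he', z, hz, hdz⟩ := hd
  obtain ⟨d', hd', w, hw, hew⟩ := he
  rw [Set.mem_singleton_iff] at he' hd'
  rw [he'] at hdz
  rw [hd'] at hew
  obtain ⟨u, v, hu, hv, huv, hdeq⟩ := hdz
  obtain ⟨u', v', hu', hv', huv', heeq⟩ := hew
  have hu1 : u < 1 := by
    rcases lt_or_eq_of_le (show u ≤ 1 by linarith) with h | h
    · exact h
    · exfalso
      apply hde
      have hv0 : v = 0 := by linarith
      rw [← hdeq, h, hv0, one_smul, zero_smul, add_zero]
  have ht : 0 < 1 - u * u' := by nlinarith [mul_nonneg hu hu']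
  have hdK : d ∈ K := by
    have h2 : (u * v') • w + v • z = (1 - u * u') • d := by
      linear_combination (norm := module) hdeq + u • heeq
    set t : ℝ := 1 - u * u' with htdef
    have h4 : t • ((t⁻¹ * (u * v')) • w + (t⁻¹ * v) • z) = t • d := by
      rw [smul_add, smul_smul, smul_smul, ← h2]
      have e1 : t * (t⁻¹ * (u * v')) = u * v' := by field_simp
      have e2 : t * (t⁻¹ * v) = v := by field_simp
      rw [e1, e2]
    have h5 : (t⁻¹ * (u * v')) • w + (t⁻¹ * v) • z = d :=
      smul_right_injective Pl ht.ne' h4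
    have hsum : t⁻¹ * (u * v') + t⁻¹ * v = 1 := by
      rw [htdef]
      field_simp [(by linarith : (0:ℝ) < 1 - u * u').ne']
      linear_combination u * huv' + huv
    have := (convex_convexHull ℝ ({a, b, c} : Set Pl)) hw hz
      (by positivity) (by positivity) hsum
    rw [h5] at this
    exact this
  refine ⟨hdK, ?_⟩
  rw [← heeq]
  exact (convex_convexHull ℝ ({a, b, c} : Set Pl)) hdK hw hu' hv' huv'

lemma key (a b c d e : Pl)
    (habc : det3 a b c ≠ 0)
    (hda : d ≠ a) (hdb : d ≠ b) (hea : e ≠ a) (heb : e ≠ b) (hde : d ≠ e)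
    (hdK : d ∈ convexHull ℝ ({a, b, c} : Set Pl))
    (heK : e ∈ convexHull ℝ ({a, b, c} : Set Pl))
    (hA : 0 < det3 d e a) (hB : 0 < det3 d e b) :
    ConvexPos ({a, b, d, e} : Set Pl) := by
  obtain ⟨m1, m2, m3, hm1, hm2, hm3, hms, hdeq⟩ := mem_tri hdK
  obtain ⟨n1, n2, n3, hn1, hn2, hn3, hns, heeq⟩ := mem_tri heK
  intro x hx hmem
  simp only [Set.mem_insert_iff, Set.mem_singleton_iff] at hx
  rcases hx with rfl | rfl | rfl | rfl
  · have hsub : ({x, b, d, e} : Set Pl) \ {x} ⊆ ({b, d, e} : Set Pl) := by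
      intro y hy; simp only [Set.mem_diff, Set.mem_insert_iff,
        Set.mem_singleton_iff] at hy ⊢; tauto
    obtain ⟨l1, l2, l3, hl1, hl2, hl3, hls, haeq⟩ := mem_tri (convexHull_mono hsub hmem)
    have hD : det3 b c x ≠ 0 := by rw [det3_cycle]; exact habc
    have hbd : det3 b c d = m1 * det3 b c x := by
      rw [hdeq, det3_comb b c x b c m1 m2 m3 hms, det3_self13, det3_self12]; ring
    have hbe : det3 b c e = n1 * det3 b c x := by
      rw [heeq, det3_comb b c x b c n1 n2 n3 hns, det3_self13, det3_self12]; ring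
    have key1 := det3_comb b c b d e l1 l2 l3 hls
    rw [← haeq, det3_self13, hbd, hbe] at key1
    have h1 : l2 * m1 + l3 * n1 = 1 := by
      have : det3 b c x * (1 - (l2 * m1 + l3 * n1)) = 0 := by ring_nf; linarith [key1]
      rcases mul_eq_zero.1 this with h | h
      · exact absurd h hD
      · linarith
    rcases unit_comb hl1 hl2 hl3 hls hm1 hm2 hm3 hms hn1 hn2 hn3 hns h1 with
      ⟨e1, e2, e3⟩ | ⟨e1, e2, e3⟩
    · exact hda (by rw [hdeq, e1, e2, e3]; simp)
    · exact hea (by rw [heeq, e1, e2, e3]; simp)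
  · have hsub : ({a, x, d, e} : Set Pl) \ {x} ⊆ ({a, d, e} : Set Pl) := by
      intro y hy; simp only [Set.mem_diff, Set.mem_insert_iff,
        Set.mem_singleton_iff] at hy ⊢; tauto
    obtain ⟨l1, l2, l3, hl1, hl2, hl3, hls, hbeq⟩ := mem_tri (convexHull_mono hsub hmem)
    have hD : det3 a c x ≠ 0 := by rw [det3_swap23]; exact neg_ne_zero.2 habc
    have had : det3 a c d = m2 * det3 a c x := by
      rw [hdeq, det3_comb a c a x c m1 m2 m3 hms, det3_self13, det3_self12]; ring
    have hae : det3 a c e = n2 * det3 a c x := by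
      rw [heeq, det3_comb a c a x c n1 n2 n3 hns, det3_self13, det3_self12]; ring
    have key1 := det3_comb a c a d e l1 l2 l3 hls
    rw [← hbeq, det3_self13, had, hae] at key1
    have h1 : l2 * m2 + l3 * n2 = 1 := by
      have : det3 a c x * (1 - (l2 * m2 + l3 * n2)) = 0 := by ring_nf; linarith [key1]
      rcases mul_eq_zero.1 this with h | h
      · exact absurd h hD
      · linarith
    rcases unit_comb hl1 hl2 hl3 hls hm2 hm1 hm3 (by linarith) hn2 hn1 hn3 (by linarith) h1 with
      ⟨e1, e2, e3⟩ | ⟨e1, e2, e3⟩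
    · exact hdb (by rw [hdeq, e1, e2, e3]; simp)
    · exact heb (by rw [heeq, e1, e2, e3]; simp)
  · have hsub : ({a, b, x, e} : Set Pl) \ {x} ⊆ ({a, b, e} : Set Pl) := by
      intro y hy; simp only [Set.mem_diff, Set.mem_insert_iff,
        Set.mem_singleton_iff] at hy ⊢; tauto
    obtain ⟨l1, l2, l3, hl1, hl2, hl3, hls, hdeq'⟩ := mem_tri (convexHull_mono hsub hmem)
    have key1 := det3_comb x e a b e l1 l2 l3 hls
    rw [← hdeq', det3_self13, det3_self12] at key1
    obtain ⟨z1, z2⟩ := zero_comb hl1 hl2 hA hB (by linarith)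
    have hl3 : l3 = 1 := by linarith
    exact hde (by rw [hdeq', z1, z2, hl3]; simp)
  · have hsub : ({a, b, d, x} : Set Pl) \ {x} ⊆ ({a, b, d} : Set Pl) := by
      intro y hy; simp only [Set.mem_diff, Set.mem_insert_iff,
        Set.mem_singleton_iff] at hy ⊢; tauto
    obtain ⟨l1, l2, l3, hl1, hl2, hl3, hls, heeq'⟩ := mem_tri (convexHull_mono hsub hmem)
    have key1 := det3_comb d x a b d l1 l2 l3 hls
    rw [← heeq', det3_self12, det3_self13] at key1
    obtain ⟨z1, z2⟩ := zero_comb hl1 hl2 hA hB (by linarith)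
    have hl3 : l3 = 1 := by linarith
    exact hde.symm (by rw [heeq', z1, z2, hl3]; simp)

lemma key_signs (a b c d e : Pl)
    (habc : det3 a b c ≠ 0)
    (hda : d ≠ a) (hdb : d ≠ b) (hea : e ≠ a) (heb : e ≠ b) (hde : d ≠ e)
    (hdK : d ∈ convexHull ℝ ({a, b, c} : Set Pl))
    (heK : e ∈ convexHull ℝ ({a, b, c} : Set Pl))
    (hs : 0 < det3 d e a * det3 d e b) :
    ConvexPos ({a, b, d, e} : Set Pl) := by
  rcases mul_pos_iff.1 hs with ⟨h1, h2⟩ | ⟨h1, h2⟩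
  · exact key a b c d e habc hda hdb hea heb hde hdK heK h1 h2
  · have h1' : 0 < det3 e d a := by rw [det3_swap12]; linarith
    have h2' : 0 < det3 e d b := by rw [det3_swap12]; linarith
    have hcp := key a b c e d habc hea heb hda hdb hde.symm heK hdK h1' h2'
    have hset : ({a, b, e, d} : Set Pl) = {a, b, d, e} := by
      ext y; simp only [Set.mem_insert_iff, Set.mem_singleton_iff]; tauto
    rwa [hset] at hcp

lemma final (P : Finset Pl) (p q d e : Pl) (hp : p ∈ P) (hq : q ∈ P)
    (hd : d ∈ P) (he : e ∈ P)
    (hpq : p ≠ q) (hpd : p ≠ d) (hpe : p ≠ e) (hqd : q ≠ d) (hqe : q ≠ e) (hde : d ≠ e)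
    (hcp : ConvexPos ({p, q, d, e} : Set Pl)) :
    ∃ Q ⊆ P, Q.card = 4 ∧ ConvexPos ↑Q := by
  classical
  refine ⟨{p, q, d, e}, ?_, ?_, ?_⟩
  · intro y hy
    simp only [Finset.mem_insert, Finset.mem_singleton] at hy
    rcases hy with rfl | rfl | rfl | rfl <;> assumption
  · rw [Finset.card_insert_of_notMem (by simp [hpq, hpd, hpe]),
      Finset.card_insert_of_notMem (by simp [hqd, hqe]),
      Finset.card_insert_of_notMem (by simp [hde]), Finset.card_singleton]
  · have hco : (↑({p, q, d, e} : Finset Pl) : Set Pl) = ({p, q, d, e} : Set Pl) := by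
      simp
    rw [hco]
    exact hcp

lemma vertexQ (P Q : Finset Pl) (hQP : Q ⊆ P)
    (hv : ∀ x ∈ Q, x ∉ convexHull ℝ (↑(P.erase x) : Set Pl)) : ConvexPos ↑Q := by
  intro x hx hmem
  refine hv x (Finset.mem_coe.1 hx) ?_
  refine convexHull_mono ?_ hmem
  intro y hy
  obtain ⟨hy1, hy2⟩ := hy
  rw [Finset.coe_erase]
  exact ⟨Finset.mem_coe.2 (hQP (Finset.mem_coe.1 hy1)), hy2⟩

end EstherKlein

/-- Esther Klein: any 5 points in general position contain
4 points in convex position. -/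
theorem stmt_13 (P : Finset Pl) (h5 : P.card = 5) (hgp : GenPos ↑P) :
    ∃ Q ⊆ P, Q.card = 4 ∧ ConvexPos ↑Q := by
  classical
  by_cases h2 : ∃ d ∈ P, ∃ e ∈ P, d ≠ e ∧ d ∈ convexHull ℝ (↑(P.erase d) : Set Pl) ∧
      e ∈ convexHull ℝ (↑(P.erase e) : Set Pl)
  · obtain ⟨d, hdP, e, heP, hde, hdin, hein⟩ := h2
    set T := (P.erase d).erase e with hT
    have hePd : e ∈ P.erase d := Finset.mem_erase.2 ⟨hde.symm, heP⟩
    have hTcard : T.card = 3 := by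
      rw [hT, Finset.card_erase_of_mem hePd, Finset.card_erase_of_mem hdP, h5]
    obtain ⟨a, b, c, hab, hac, hbc, hTeq⟩ := Finset.card_eq_three.1 hTcard
    have haT : a ∈ T := by rw [hTeq]; simp
    have hbT : b ∈ T := by rw [hTeq]; simp
    have hcT : c ∈ T := by rw [hTeq]; simp
    have hae : a ≠ e := (Finset.mem_erase.1 haT).1
    have had : a ≠ d := (Finset.mem_erase.1 (Finset.mem_erase.1 haT).2).1
    have haP : a ∈ P := (Finset.mem_erase.1 (Finset.mem_erase.1 haT).2).2
    have hbe : b ≠ e := (Finset.mem_erase.1 hbT).1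
    have hbd : b ≠ d := (Finset.mem_erase.1 (Finset.mem_erase.1 hbT).2).1
    have hbP : b ∈ P := (Finset.mem_erase.1 (Finset.mem_erase.1 hbT).2).2
    have hce : c ≠ e := (Finset.mem_erase.1 hcT).1
    have hcd : c ≠ d := (Finset.mem_erase.1 (Finset.mem_erase.1 hcT).2).1
    have hcP : c ∈ P := (Finset.mem_erase.1 (Finset.mem_erase.1 hcT).2).2
    have hdPe : d ∈ P.erase e := Finset.mem_erase.2 ⟨hde, hdP⟩
    have hEd : P.erase d = insert e T := by
      rw [hT, Finset.insert_erase hePd]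
    have hEe : P.erase e = insert d T := by
      calc P.erase e = insert d ((P.erase e).erase d) := (Finset.insert_erase hdPe).symm
        _ = insert d T := by
            rw [hT]
            congr 1
            ext y
            simp only [Finset.mem_erase]
            tauto
    have hcoed : (↑(P.erase d) : Set Pl) = insert e ({a, b, c} : Set Pl) := by
      rw [hEd, hTeq]; simp
    have hcoee : (↑(P.erase e) : Set Pl) = insert d ({a, b, c} : Set Pl) := by
      rw [hEe, hTeq]; simp
    rw [hcoed] at hdin
    rw [hcoee] at hein
    obtain ⟨hdK, heK⟩ := interior_pts hde hdin hein
    have hgp' : ∀ x ∈ P, ∀ y ∈ P, ∀ z ∈ P, x ≠ y → x ≠ z → y ≠ z → det3 x y z ≠ 0 := by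
      intro x hx y hy z hz h1 h2 h3 h0
      exact hgp x (Finset.mem_coe.2 hx) y (Finset.mem_coe.2 hy) z (Finset.mem_coe.2 hz)
        h1 h2 h3 (collinear_of_det3 h0)
    have habc : det3 a b c ≠ 0 := hgp' a haP b hbP c hcP hab hac hbc
    have hsa : det3 d e a ≠ 0 := hgp' d hdP e heP a haP hde had.symm hae.symm
    have hsb : det3 d e b ≠ 0 := hgp' d hdP e heP b hbP hde hbd.symm hbe.symm
    have hsc : det3 d e c ≠ 0 := hgp' d hdP e heP c hcP hde hcd.symm hce.symm
    have tri : 0 < det3 d e a * det3 d e b ∨ 0 < det3 d e a * det3 d e c ∨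
        0 < det3 d e b * det3 d e c := by
      rcases lt_or_gt_of_ne hsa with h | h <;> rcases lt_or_gt_of_ne hsb with h' | h' <;>
        rcases lt_or_gt_of_ne hsc with h'' | h''
      · exact Or.inl (mul_pos_of_neg_of_neg h h')
      · exact Or.inl (mul_pos_of_neg_of_neg h h')
      · exact Or.inr (Or.inl (mul_pos_of_neg_of_neg h h''))
      · exact Or.inr (Or.inr (mul_pos h' h''))
      · exact Or.inr (Or.inr (mul_pos_of_neg_of_neg h' h''))
      · exact Or.inr (Or.inl (mul_pos h h''))
      · exact Or.inl (mul_pos h h')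
      · exact Or.inl (mul_pos h h')
    rcases tri with h | h | h
    · exact final P a b d e haP hbP hdP heP hab had hae hbd hbe hde
        (key_signs a b c d e habc had.symm hbd.symm hae.symm hbe.symm hde hdK heK h)
    · have hset : ({a, c, b} : Set Pl) = {a, b, c} := by
        ext y; simp only [Set.mem_insert_iff, Set.mem_singleton_iff]; tauto
      have habc' : det3 a c b ≠ 0 := by rw [det3_swap23]; exact neg_ne_zero.2 habc
      exact final P a c d e haP hcP hdP heP hac had hae hcd hce hde
        (key_signs a c b d e habc' had.symm hcd.symm hae.symm hce.symm hde
          (hset ▸ hdK) (hset ▸ heK) h)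
    · have hset : ({b, c, a} : Set Pl) = {a, b, c} := by
        ext y; simp only [Set.mem_insert_iff, Set.mem_singleton_iff]; tauto
      have habc' : det3 b c a ≠ 0 := by rw [det3_cycle]; exact habc
      exact final P b c d e hbP hcP hdP heP hbc hbd hbe hcd hce hde
        (key_signs b c a d e habc' hbd.symm hcd.symm hbe.symm hce.symm hde
          (hset ▸ hdK) (hset ▸ heK) h)
  · push_neg at h2
    by_cases h1 : ∃ x ∈ P, x ∈ convexHull ℝ (↑(P.erase x) : Set Pl)
    · obtain ⟨x0, hx0P, hx0⟩ := h1
      have hc4 : 4 ≤ (P.erase x0).card := by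
        rw [Finset.card_erase_of_mem hx0P, h5]
      obtain ⟨Q, hQ, hQ4⟩ := Finset.exists_subset_card_eq hc4
      have hQP : Q ⊆ P := fun y hy => (Finset.erase_subset x0 P) (hQ hy)
      refine ⟨Q, hQP, hQ4, vertexQ P Q hQP ?_⟩
      intro y hyQ hyc
      have hy' := hQ hyQ
      have hyne : y ≠ x0 := (Finset.mem_erase.1 hy').1
      have hyP : y ∈ P := (Finset.mem_erase.1 hy').2
      exact h2 y hyP x0 hx0P hyne hyc hx0
    · push_neg at h1
      obtain ⟨Q, hQ, hQ4⟩ := Finset.exists_subset_card_eq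
        (show 4 ≤ P.card by rw [h5]; norm_num)
      exact ⟨Q, hQ, hQ4, vertexQ P Q hQ fun y hy => h1 y (hQ hy)⟩
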